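/- Let Y₁,Z₁,…,Y_m,Z_m be pairwise disjoint sets of variables and X any set of variables. Then J(X ⟶⟶ Y₁ | ⋯ | Y_m) ≤ J(X ⟶⟶ Y₁Z₁ | ⋯ | Y_mZ_m), where J(X ⟶⟶ W₁|⋯|W_m) := Σᵢ H(X∪Wᵢ) − (m−1)H(X) − H(X∪W₁∪⋯∪W_m). This holds for every polymatroid H (i.e., is a Shannon inequality). -/

import Mathlib

open Finset

/-- The measure `J(X ⟶⟶ W₁|⋯|W_m) := Σᵢ H(X∪Wᵢ) − (m−1)H(X) − H(X∪W₁∪⋯∪W_m)`. -/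
noncomputable def Jm {α : Type*} [DecidableEq α] {ι : Type*} [Fintype ι]
    (H : Finset α → ℝ) (X : Finset α) (W : ι → Finset α) : ℝ :=
  (∑ i, H (X ∪ W i)) - ((Fintype.card ι : ℝ) - 1) * H X - H (X ∪ univ.biUnion W)

/-- Diminishing returns: if `A ⊆ B` then `H (B ∪ C) - H B ≤ H (A ∪ C) - H A`. -/
lemma dimin {α : Type*} [DecidableEq α] (H : Finset α → ℝ)
    (hmono : ∀ A B : Finset α, A ⊆ B → H A ≤ H B)
    (hsub : ∀ A B : Finset α, H (A ∪ B) + H (A ∩ B) ≤ H A + H B)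
    {A B C : Finset α} (hAB : A ⊆ B) :
    H (B ∪ C) + H A ≤ H B + H (A ∪ C) := by
  have h1 := hsub B (A ∪ C)
  have h2 : B ∪ (A ∪ C) = B ∪ C := by
    ext x; simp only [Finset.mem_union]
    constructor
    · rintro (h | h | h) <;> [exact Or.inl h; exact Or.inl (hAB h); exact Or.inr h]
    · rintro (h | h) <;> [exact Or.inl h; exact Or.inr (Or.inr h)]
  have h3 : A ⊆ B ∩ (A ∪ C) := fun x hx =>
    Finset.mem_inter.mpr ⟨hAB hx, Finset.mem_union_left _ hx⟩
  have h4 := hmono _ _ h3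
  rw [h2] at h1
  linarith

/-- Telescoping bound. -/
lemma tele {α ι : Type*} [DecidableEq α] [DecidableEq ι] (H : Finset α → ℝ)
    (hmono : ∀ A B : Finset α, A ⊆ B → H A ≤ H B)
    (hsub : ∀ A B : Finset α, H (A ∪ B) + H (A ∩ B) ≤ H A + H B)
    (B : Finset α) (A C : ι → Finset α) (hA : ∀ i, A i ⊆ B) (s : Finset ι) :
    H (B ∪ s.biUnion C) ≤ H B + ∑ i ∈ s, (H (A i ∪ C i) - H (A i)) := by
  induction s using Finset.induction with
  | empty => simp
  | insert k s hk ih =>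
    rw [Finset.biUnion_insert, Finset.sum_insert hk]
    have h1 := dimin H hmono hsub (A := A k) (B := B ∪ s.biUnion C) (C := C k)
      ((hA k).trans Finset.subset_union_left)
    rw [Finset.union_comm (C k), ← Finset.union_assoc]
    linarith

/-- For pairwise disjoint `Y₁,Z₁,…,Y_m,Z_m` and any `X`,
`J(X ⟶⟶ Y₁|⋯|Y_m) ≤ J(X ⟶⟶ Y₁Z₁|⋯|Y_mZ_m)` holds for every polymatroid `H`. -/
theorem J_mono_dependents {α : Type*} [DecidableEq α] {m : ℕ}
    (H : Finset α → ℝ)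
    (h0 : H ∅ = 0)
    (hmono : ∀ A B : Finset α, A ⊆ B → H A ≤ H B)
    (hsub : ∀ A B : Finset α, H (A ∪ B) + H (A ∩ B) ≤ H A + H B)
    (X : Finset α) (Y Z : Fin m → Finset α)
    (hYZ : ∀ i, Disjoint (Y i) (Z i))
    (hpair : ∀ i j, i ≠ j → Disjoint (Y i ∪ Z i) (Y j ∪ Z j))
    (hX : ∀ i, Disjoint X (Y i ∪ Z i)) :
    Jm H X Y ≤ Jm H X (fun i => Y i ∪ Z i) := by
  have key := tele H hmono hsub (X ∪ univ.biUnion Y)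
    (fun i => X ∪ Y i) Z
    (fun i => Finset.union_subset_union_right (Finset.subset_biUnion_of_mem Y (mem_univ i)))
    univ
  have hB : univ.biUnion (fun i => Y i ∪ Z i) = univ.biUnion Y ∪ univ.biUnion Z := by
    ext x
    simp only [Finset.mem_biUnion, Finset.mem_union, Finset.mem_univ, true_and]
    constructor
    · rintro ⟨i, h | h⟩
      exacts [Or.inl ⟨i, h⟩, Or.inr ⟨i, h⟩]
    · rintro (⟨i, h⟩ | ⟨i, h⟩)
      exacts [⟨i, Or.inl h⟩, ⟨i, Or.inr h⟩]
  have hU : (X ∪ univ.biUnion Y) ∪ univ.biUnion Z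
      = X ∪ univ.biUnion (fun i => Y i ∪ Z i) := by
    rw [hB, Finset.union_assoc]
  rw [hU] at key
  have hsum : ∑ i, (H ((X ∪ Y i) ∪ Z i) - H (X ∪ Y i))
      = (∑ i, H (X ∪ (Y i ∪ Z i))) - ∑ i, H (X ∪ Y i) := by
    rw [Finset.sum_sub_distrib]
    simp [Finset.union_assoc]
  rw [hsum] at key
  simp only [Jm]
  linarith
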